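/- Let n ≥ 1. In the ring of formal power series in q with coefficients in the polynomial ring ℤ[t], let F_n(q,t) be the series whose coefficient of q^k is ∑_{a ∈ ℤ≥0^n, a_1+⋯+a_n = k} t^{d(a)} (a finite sum, hence a polynomial in t). Then (1 − q)·F_n(q,t) equals the series whose coefficient of q^k is ∑_{a ∈ ℤ≥0^n, a_n = 0, a_1+⋯+a_n = k} t^{d(a)}. -/

import Mathlib

/-- The statistic `d(a) = #{(i,j) : i < j and (a_i = a_j or a_j = a_i + 1)}`. -/
def dStat (n : ℕ) (a : Fin n → ℕ) : ℕ :=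
  (Finset.univ.filter fun p : Fin n × Fin n =>
    p.1 < p.2 ∧ (a p.1 = a p.2 ∨ a p.2 = a p.1 + 1)).card

/-- The series `F_n(q,t) = ∑_{a ∈ ℤ≥0^n} q^{a_1+⋯+a_n} t^{d(a)} ∈ (ℤ[t])[[q]]`: its
coefficient of `q^k` is the (finite) sum of `t^{d(a)}` over tuples `a` with `∑ a_i = k`. -/
noncomputable def Fser (n : ℕ) : PowerSeries (Polynomial ℤ) :=
  PowerSeries.mk fun k =>
    ∑ a ∈ Finset.Nat.antidiagonalTuple n k, (Polynomial.X : Polynomial ℤ) ^ dStat n a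

/-- The shift map: `ψ a = (a_2, …, a_n, a_1 + 1)`. -/
def psiMap (m : ℕ) (a : Fin (m+1) → ℕ) : Fin (m+1) → ℕ :=
  fun i => if h : (i : ℕ) < m then a ⟨(i : ℕ) + 1, by omega⟩ else a 0 + 1

def phiMap (m : ℕ) (b : Fin (m+1) → ℕ) : Fin (m+1) → ℕ :=
  fun i => if (i : ℕ) = 0 then b (Fin.last m) - 1 else b ⟨(i : ℕ) - 1, by omega⟩

lemma psi_last (m : ℕ) (a : Fin (m+1) → ℕ) : psiMap m a (Fin.last m) = a 0 + 1 := by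
  simp [psiMap]

lemma psi_lt (m : ℕ) (a : Fin (m+1) → ℕ) (i : Fin (m+1)) (h : (i : ℕ) < m) :
    psiMap m a i = a ⟨(i : ℕ) + 1, by omega⟩ := by
  simp [psiMap, h]

lemma phi_psi (m : ℕ) (a : Fin (m+1) → ℕ) : phiMap m (psiMap m a) = a := by
  funext i
  rcases Nat.eq_zero_or_pos (i : ℕ) with h | h
  · have : i = 0 := Fin.ext h
    subst this
    simp [phiMap, psi_last]
  · have hi : (i : ℕ) ≠ 0 := by omega
    have h1 : (i : ℕ) - 1 < m := by omega
    simp only [phiMap, if_neg hi]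
    rw [psi_lt m a _ h1]
    congr 1
    exact Fin.ext (show (i : ℕ) - 1 + 1 = (i : ℕ) by omega)

lemma psi_phi (m : ℕ) (b : Fin (m+1) → ℕ) (hb : b (Fin.last m) ≠ 0) :
    psiMap m (phiMap m b) = b := by
  funext i
  rcases lt_or_ge (i : ℕ) m with h | h
  · rw [psi_lt m _ i h]
    simp only [phiMap]
    rw [if_neg (show ¬((⟨(i:ℕ)+1, by omega⟩ : Fin (m+1)) : ℕ) = 0 from Nat.succ_ne_zero _)]
    exact congrArg b (Fin.ext (by simp))
  · have : i = Fin.last m := Fin.ext (by have := i.isLt; simp [Fin.last]; omega)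
    subst this
    rw [psi_last]
    simp only [phiMap]
    rw [if_pos (Fin.val_zero (m+1))]
    omega

lemma psi_sum (m : ℕ) (a : Fin (m+1) → ℕ) :
    ∑ i, psiMap m a i = (∑ i, a i) + 1 := by
  rw [Fin.sum_univ_castSucc, Fin.sum_univ_succ (f := a)]
  have h1 : psiMap m a (Fin.last m) = a 0 + 1 := psi_last m a
  have h2 : ∀ i : Fin m, psiMap m a (Fin.castSucc i) = a i.succ := by
    intro i
    rw [psi_lt m a _ (by simpa using i.isLt)]
    congr 1
  simp only [h1, h2]
  omega

def shUp (m : ℕ) (x : Fin (m+1)) : Fin (m+1) :=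
  ⟨((x : ℕ) + 1) % (m+1), Nat.mod_lt _ (Nat.succ_pos m)⟩

def shDown (m : ℕ) (x : Fin (m+1)) : Fin (m+1) :=
  ⟨(x : ℕ) - 1, lt_of_le_of_lt (Nat.sub_le _ _) x.isLt⟩

@[simp] lemma shDown_val (m : ℕ) (x : Fin (m+1)) :
    ((shDown m x : Fin (m+1)) : ℕ) = (x : ℕ) - 1 := rfl

lemma shUp_val (m : ℕ) (x : Fin (m+1)) (h : (x : ℕ) < m) :
    ((shUp m x : Fin (m+1)) : ℕ) = (x : ℕ) + 1 := Nat.mod_eq_of_lt (by omega)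

def fwd (m : ℕ) (q : Fin (m+1) × Fin (m+1)) : Fin (m+1) × Fin (m+1) :=
  if (q.2 : ℕ) = m then (0, shUp m q.1) else (shUp m q.1, shUp m q.2)

def bwd (m : ℕ) (p : Fin (m+1) × Fin (m+1)) : Fin (m+1) × Fin (m+1) :=
  if (p.1 : ℕ) = 0 then (shDown m p.2, Fin.last m) else (shDown m p.1, shDown m p.2)

lemma dStat_psi (m : ℕ) (a : Fin (m+1) → ℕ) :
    dStat (m+1) (psiMap m a) = dStat (m+1) a := by
  unfold dStat
  refine Finset.card_nbij' (fwd m) (bwd m) ?_ ?_ ?_ ?_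
  · -- fwd maps psi-pairs to a-pairs
    rintro ⟨u, v⟩ (hq : (u, v) ∈ Finset.filter _ _)
    simp only [Finset.mem_coe, Finset.mem_filter, Finset.mem_univ, true_and, Fin.lt_def] at hq ⊢
    obtain ⟨huv, hcond⟩ := hq
    by_cases hv : (v : ℕ) = m
    · have hu : (u : ℕ) < m := by omega
      have h1 : psiMap m a u = a ⟨(u:ℕ)+1, by omega⟩ := psi_lt m a u hu
      have h2 : psiMap m a v = a 0 + 1 := by
        rw [show v = Fin.last m from Fin.ext hv, psi_last]
      rw [h1, h2] at hcond
      have hup : shUp m u = ⟨(u:ℕ)+1, by omega⟩ := Fin.ext (shUp_val m u hu)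
      simp only [fwd, if_pos hv, hup]
      exact ⟨by simp, by omega⟩
    · have hu : (u : ℕ) < m := by omega
      have hvm : (v : ℕ) < m := by have := v.isLt; omega
      have h1 : psiMap m a u = a ⟨(u:ℕ)+1, by omega⟩ := psi_lt m a u hu
      have h2 : psiMap m a v = a ⟨(v:ℕ)+1, by omega⟩ := psi_lt m a v hvm
      rw [h1, h2] at hcond
      have hup : shUp m u = ⟨(u:ℕ)+1, by omega⟩ := Fin.ext (shUp_val m u hu)
      have hvp : shUp m v = ⟨(v:ℕ)+1, by omega⟩ := Fin.ext (shUp_val m v hvm)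
      simp only [fwd, if_neg hv, hup, hvp]
      exact ⟨by simp; omega, hcond⟩
  · -- bwd maps a-pairs to psi-pairs
    rintro ⟨i, j⟩ (hp : (i, j) ∈ Finset.filter _ _)
    simp only [Finset.mem_coe, Finset.mem_filter, Finset.mem_univ, true_and, Fin.lt_def] at hp ⊢
    obtain ⟨hij, hcond⟩ := hp
    by_cases hi : (i : ℕ) = 0
    · have hj1 : 1 ≤ (j : ℕ) := by omega
      have hjm : (j : ℕ) - 1 < m := by have := j.isLt; omega
      have h1 : psiMap m a (shDown m j) = a ⟨(j:ℕ)-1+1, by omega⟩ := psi_lt m a _ hjm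
      rw [show (⟨(j:ℕ)-1+1, by omega⟩ : Fin (m+1)) = j from Fin.ext (by simp; omega)] at h1
      simp only [bwd, if_pos hi]
      refine ⟨by simp [shDown, Fin.last]; omega, ?_⟩
      rw [h1, psi_last]
      rw [show i = 0 from Fin.ext hi] at hcond
      omega
    · have him : (i : ℕ) - 1 < m := by have := j.isLt; omega
      have hjm : (j : ℕ) - 1 < m := by have := j.isLt; omega
      have h1 : psiMap m a (shDown m i) = a ⟨(i:ℕ)-1+1, by omega⟩ := psi_lt m a _ him
      have h2 : psiMap m a (shDown m j) = a ⟨(j:ℕ)-1+1, by omega⟩ := psi_lt m a _ hjm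
      rw [show (⟨(i:ℕ)-1+1, by omega⟩ : Fin (m+1)) = i from Fin.ext (by simp; omega)] at h1
      rw [show (⟨(j:ℕ)-1+1, by omega⟩ : Fin (m+1)) = j from Fin.ext (by simp; omega)] at h2
      simp only [bwd, if_neg hi]
      refine ⟨by simp [shDown]; omega, ?_⟩
      rw [h1, h2]
      exact hcond
  · -- bwd (fwd q) = q on psi-pairs
    rintro ⟨u, v⟩ (hq : (u, v) ∈ Finset.filter _ _)
    simp only [Finset.mem_filter, Finset.mem_univ, true_and, Fin.lt_def] at hq
    obtain ⟨huv, -⟩ := hq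
    by_cases hv : (v : ℕ) = m
    · have hu : (u : ℕ) < m := by omega
      simp only [fwd, if_pos hv, bwd, Fin.val_zero, if_pos rfl]
      refine Prod.ext ?_ (Fin.ext hv.symm)
      exact Fin.ext (by simp [shDown, shUp_val m u hu])
    · have hu : (u : ℕ) < m := by omega
      have hvm : (v : ℕ) < m := by have := v.isLt; omega
      simp only [fwd, if_neg hv, bwd]
      rw [if_neg (by simp [shUp_val m u hu])]
      refine Prod.ext (Fin.ext ?_) (Fin.ext ?_) <;>
        simp [shDown, shUp_val m u hu, shUp_val m v hvm]
  · -- fwd (bwd p) = p on a-pairs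
    rintro ⟨i, j⟩ (hp : (i, j) ∈ Finset.filter _ _)
    simp only [Finset.mem_filter, Finset.mem_univ, true_and, Fin.lt_def] at hp
    obtain ⟨hij, -⟩ := hp
    by_cases hi : (i : ℕ) = 0
    · have hjm : (j : ℕ) - 1 < m := by have := j.isLt; omega
      simp only [bwd, if_pos hi, fwd]
      rw [if_pos (show ((Fin.last m : Fin (m+1)) : ℕ) = m from rfl)]
      refine Prod.ext (Fin.ext (by simp [hi])) (Fin.ext ?_)
      rw [shUp_val m _ (by rw [shDown_val]; omega), shDown_val]
      dsimp only
      omega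
    · have hjne : (j : ℕ) - 1 ≠ m := by have := j.isLt; omega
      simp only [bwd, if_neg hi, fwd]
      rw [if_neg (show ¬((shDown m j : Fin (m+1)) : ℕ) = m from hjne)]
      have him : (i : ℕ) - 1 < m := by have := j.isLt; omega
      have hjm : (j : ℕ) - 1 < m := by have := j.isLt; omega
      refine Prod.ext (Fin.ext ?_) (Fin.ext ?_) <;>
        rw [shUp_val m _ (by rw [shDown_val]; omega), shDown_val] <;> dsimp only <;> omega

/-- For `n ≥ 1`, in `(ℤ[t])[[q]]` one has
`(1 - q) · F_n(q,t) = ∑_{a ∈ ℤ≥0^n, a_n = 0} q^{a_1+⋯+a_n} t^{d(a)}`. -/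
theorem statement12 (n : ℕ) (hn : 0 < n) :
    (1 - PowerSeries.X) * Fser n =
      PowerSeries.mk fun k =>
        ∑ a ∈ (Finset.Nat.antidiagonalTuple n k).filter
            (fun a => a ⟨n - 1, by omega⟩ = 0),
          (Polynomial.X : Polynomial ℤ) ^ dStat n a := by
  obtain ⟨m, rfl⟩ : ∃ m, n = m + 1 := ⟨n - 1, by omega⟩
  have hlast : (⟨m + 1 - 1, by omega⟩ : Fin (m+1)) = Fin.last m := rfl
  refine PowerSeries.ext fun k => ?_
  rw [sub_mul, one_mul, map_sub]
  cases k with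
  | zero =>
      rw [PowerSeries.coeff_zero_X_mul, sub_zero]
      simp only [Fser, PowerSeries.coeff_mk]
      congr 1
      rw [Finset.Nat.antidiagonalTuple_zero_right]
      simp [Finset.filter_singleton]
  | succ k =>
      rw [PowerSeries.coeff_succ_X_mul]
      simp only [Fser, PowerSeries.coeff_mk]
      rw [sub_eq_iff_eq_add]
      -- split antidiagonalTuple (m+1) (k+1) by whether last entry is 0
      rw [← Finset.sum_filter_add_sum_filter_not
        (Finset.Nat.antidiagonalTuple (m+1) (k+1))
        (fun a => a ⟨m + 1 - 1, by omega⟩ = 0)]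
      congr 1
      -- bijection with antidiagonalTuple (m+1) k via psiMap
      refine Finset.sum_nbij' (i := phiMap m) (j := psiMap m) ?_ ?_ ?_ ?_ ?_
      · intro b hb
        simp only [Finset.mem_filter, Finset.Nat.mem_antidiagonalTuple, hlast] at hb ⊢
        obtain ⟨hsum, hb0⟩ := hb
        have := psi_sum m (phiMap m b)
        rw [psi_phi m b hb0] at this
        omega
      · intro a ha
        simp only [Finset.mem_filter, Finset.Nat.mem_antidiagonalTuple, hlast] at ha ⊢
        refine ⟨by rw [psi_sum m a, ha], ?_⟩
        rw [psi_last]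
        omega
      · intro b hb
        simp only [Finset.mem_filter, hlast] at hb
        exact psi_phi m b hb.2
      · intro a _
        exact phi_psi m a
      · intro b hb
        simp only [Finset.mem_filter, hlast] at hb
        conv_lhs => rw [← psi_phi m b hb.2, dStat_psi]
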